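/- Let (X,T) be a topological dynamical system. Then (X,T) is uniquely ergodic if and only if for every continuous f : X → ℝ there is a constant c such that the functions x ↦ (1/H_n) ∑_{k=1}^n (1/k) f(T^{k-1}x) converge uniformly on X to c as n → ∞. -/

import Mathlib

open Filter MeasureTheory Topology

/-- The `n`-th harmonic number `H_n = ∑_{k=1}^n 1/k` as a real number. -/
noncomputable def H (n : ℕ) : ℝ := ∑ k ∈ Finset.range n, (1 : ℝ) / (k + 1)

/-- A Borel probability measure `μ` is `T`-invariant if `μ(T⁻¹B) = μ(B)` for every Borel set. -/
def IsInvariantMeasure {X : Type*} [MetricSpace X] [MeasurableSpace X]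
    (T : X → X) (μ : ProbabilityMeasure X) : Prop :=
  ∀ B : Set X, MeasurableSet B → μ (T ⁻¹' B) = μ B

section RMK

variable {X : Type*} [MetricSpace X] [CompactSpace X]

lemma cont_integrable [MeasurableSpace X] [BorelSpace X] (μ : Measure X) [IsFiniteMeasure μ]
    {f : X → ℝ} (hf : Continuous f) : Integrable f μ :=
  hf.integrable_of_hasCompactSupport (IsCompact.of_isClosed_subset isCompact_univ
    (isClosed_tsupport f) (Set.subset_univ _))

/-- Test functions for the Riesz content of `K`. -/
def FF (K : Set X) : Set C(X, ℝ) :=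
  {f | (∀ x, 0 ≤ f x ∧ f x ≤ 1) ∧ ∀ x ∈ K, f x = 1}

lemma one_mem_FF (K : Set X) : (1 : C(X, ℝ)) ∈ FF K :=
  ⟨fun _ => ⟨zero_le_one, le_refl 1⟩, fun _ _ => rfl⟩

variable (L : C(X, ℝ) → ℝ)

noncomputable def rr (K : Set X) : ℝ := sInf (L '' FF K)

variable (hadd : ∀ f g, L (f + g) = L f + L g)
    (hsmul : ∀ (c : ℝ) f, L (c • f) = c * L f)
    (hpos : ∀ f : C(X, ℝ), (∀ x, 0 ≤ f x) → 0 ≤ L f)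
    (hone : L 1 = 1)

section lemmas
include hadd hsmul hpos hone

lemma L_zero : L 0 = 0 := by
  have := hsmul 0 0; simpa using this

lemma L_mono {f g : C(X, ℝ)} (h : ∀ x, f x ≤ g x) : L f ≤ L g := by
  have e : f + (g - f) = g := by abel
  have : L f + L (g - f) = L g := by rw [← hadd, e]
  have h0 : 0 ≤ L (g - f) := hpos _ (fun x => by simpa using sub_nonneg.2 (h x))
  linarith

lemma L_bddBelow (K : Set X) : BddBelow (L '' FF K) := by
  refine ⟨0, ?_⟩
  rintro - ⟨f, hf, rfl⟩
  exact hpos f (fun x => (hf.1 x).1)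

lemma rr_le {K : Set X} {f : C(X, ℝ)} (hf : f ∈ FF K) : rr L K ≤ L f :=
  csInf_le (L_bddBelow L hadd hsmul hpos hone K) ⟨f, hf, rfl⟩

lemma le_rr {K : Set X} {c : ℝ} (h : ∀ f ∈ FF K, c ≤ L f) : c ≤ rr L K :=
  le_csInf ⟨L 1, 1, one_mem_FF K, rfl⟩ (by rintro - ⟨f, hf, rfl⟩; exact h f hf)

lemma rr_nonneg (K : Set X) : 0 ≤ rr L K :=
  le_rr L hadd hsmul hpos hone (fun f hf => hpos f (fun x => (hf.1 x).1))

lemma rr_le_one (K : Set X) : rr L K ≤ 1 := by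
  have := rr_le L hadd hsmul hpos hone (one_mem_FF K)
  rwa [hone] at this

lemma rr_mono {K K' : Set X} (h : K ⊆ K') : rr L K ≤ rr L K' :=
  le_rr L hadd hsmul hpos hone (fun f hf =>
    rr_le L hadd hsmul hpos hone ⟨hf.1, fun x hx => hf.2 x (h hx)⟩)

lemma rr_exists_lt {K : Set X} {ε : ℝ} (hε : 0 < ε) :
    ∃ f ∈ FF K, L f < rr L K + ε := by
  obtain ⟨-, ⟨f, hf, rfl⟩, hlt⟩ :=
    exists_lt_of_csInf_lt (s := L '' FF K) ⟨L 1, 1, one_mem_FF K, rfl⟩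
      (lt_add_of_pos_right _ hε)
  exact ⟨f, hf, hlt⟩

lemma rr_univ : rr L (Set.univ : Set X) = 1 := by
  refine le_antisymm (by simpa [hone] using rr_le L hadd hsmul hpos hone (one_mem_FF _)) ?_
  refine le_rr L hadd hsmul hpos hone (fun f hf => ?_)
  have : f = 1 := ContinuousMap.ext (fun x => hf.2 x trivial)
  rw [this, hone]

lemma rr_superadd {K₁ K₂ : Set X} (h₁ : IsClosed K₁) (h₂ : IsClosed K₂)
    (hd : Disjoint K₁ K₂) : rr L K₁ + rr L K₂ ≤ rr L (K₁ ∪ K₂) := by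
  obtain ⟨g, hg0, hg1, hg01⟩ := exists_continuous_zero_one_of_isClosed h₂ h₁ hd.symm
  refine le_rr L hadd hsmul hpos hone (fun f hf => ?_)
  have hfg : f * g ∈ FF K₁ := by
    refine ⟨fun x => ⟨mul_nonneg (hf.1 x).1 (hg01 x).1, ?_⟩, fun x hx => ?_⟩
    · calc f x * g x ≤ 1 * 1 := by
            exact mul_le_mul (hf.1 x).2 (hg01 x).2 (hg01 x).1 zero_le_one
        _ = 1 := by ring
    · simp [ContinuousMap.mul_apply, hf.2 x (Or.inl hx), hg1 hx]
  have hfg' : f * (1 - g) ∈ FF K₂ := by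
    refine ⟨fun x => ⟨mul_nonneg (hf.1 x).1 (by simpa using (hg01 x).2), ?_⟩,
      fun x hx => ?_⟩
    · calc f x * (1 - g x) ≤ 1 * 1 := by
            refine mul_le_mul (hf.1 x).2 (by simpa using (hg01 x).1) (by simpa using (hg01 x).2)
              zero_le_one
        _ = 1 := by ring
    · have : g x = 0 := hg0 hx
      simp [ContinuousMap.mul_apply, ContinuousMap.sub_apply, hf.2 x (Or.inr hx), this]
  have key : L (f * g) + L (f * (1 - g)) = L f := by
    rw [← hadd]
    congr 1
    ring
  calc rr L K₁ + rr L K₂ ≤ L (f * g) + L (f * (1 - g)) :=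
        add_le_add (rr_le L hadd hsmul hpos hone hfg) (rr_le L hadd hsmul hpos hone hfg')
    _ = L f := key

lemma rr_subadd (K₁ K₂ : Set X) : rr L (K₁ ∪ K₂) ≤ rr L K₁ + rr L K₂ := by
  refine le_of_forall_pos_le_add (fun ε hε => ?_)
  obtain ⟨f, hf, hfL⟩ := rr_exists_lt L hadd hsmul hpos hone (K := K₁) (half_pos hε)
  obtain ⟨g, hg, hgL⟩ := rr_exists_lt L hadd hsmul hpos hone (K := K₂) (half_pos hε)
  have hh : (f + g) ⊓ 1 ∈ FF (K₁ ∪ K₂) := by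
    constructor
    · intro x
      constructor
      · simp only [ContinuousMap.inf_apply, ContinuousMap.add_apply, ContinuousMap.one_apply,
          le_inf_iff]
        exact ⟨add_nonneg (hf.1 x).1 (hg.1 x).1, zero_le_one⟩
      · simp [ContinuousMap.inf_apply]
    · intro x hx
      have h1 : (1 : ℝ) ≤ f x + g x := by
        rcases hx with hx | hx
        · have := hf.2 x hx; nlinarith [(hg.1 x).1]
        · have := hg.2 x hx; nlinarith [(hf.1 x).1]
      simp only [ContinuousMap.inf_apply, ContinuousMap.add_apply, ContinuousMap.one_apply]
      exact min_eq_right h1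
  have : L ((f + g) ⊓ 1) ≤ L (f + g) :=
    L_mono L hadd hsmul hpos hone (fun x => by
      simp [ContinuousMap.inf_apply])
  have h2 := rr_le L hadd hsmul hpos hone hh
  rw [hadd] at this
  linarith

end lemmas

end RMK
section RMK2
open TopologicalSpace
open scoped ENNReal NNReal
variable {X : Type*} [MetricSpace X] [CompactSpace X]
variable (L : C(X, ℝ) → ℝ)
variable (hadd : ∀ f g, L (f + g) = L f + L g)
    (hsmul : ∀ (c : ℝ) f, L (c • f) = c * L f)
    (hpos : ∀ f : C(X, ℝ), (∀ x, 0 ≤ f x) → 0 ≤ L f)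
    (hone : L 1 = 1)

/-- The Riesz content associated to a positive normalized functional. -/
noncomputable def rieszC : Content X where
  toFun K := Real.toNNReal (rr L K)
  mono' K₁ K₂ h := Real.toNNReal_le_toNNReal (rr_mono L hadd hsmul hpos hone h)
  sup_disjoint' K₁ K₂ hd h₁ h₂ := by
    have hcoe : ((K₁ ⊔ K₂ : Compacts X) : Set X) = (K₁ : Set X) ∪ K₂ := rfl
    have heq : rr L ((K₁ : Set X) ∪ K₂) = rr L K₁ + rr L K₂ :=
      le_antisymm (rr_subadd L hadd hsmul hpos hone _ _)
        (rr_superadd L hadd hsmul hpos hone h₁ h₂ hd)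
    show Real.toNNReal (rr L ((K₁ ⊔ K₂ : Compacts X) : Set X)) = _
    rw [hcoe, heq, Real.toNNReal_add (rr_nonneg L hadd hsmul hpos hone _)
      (rr_nonneg L hadd hsmul hpos hone _)]
  sup_le' K₁ K₂ := by
    show Real.toNNReal (rr L ((K₁ ⊔ K₂ : Compacts X) : Set X)) ≤ _
    have hcoe : ((K₁ ⊔ K₂ : Compacts X) : Set X) = (K₁ : Set X) ∪ K₂ := rfl
    calc Real.toNNReal (rr L ((K₁ ⊔ K₂ : Compacts X) : Set X))
        ≤ Real.toNNReal (rr L K₁ + rr L K₂) := by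
          apply Real.toNNReal_le_toNNReal
          rw [hcoe]
          exact rr_subadd L hadd hsmul hpos hone _ _
      _ ≤ _ := Real.toNNReal_add_le

lemma rieszC_regular : (rieszC L hadd hsmul hpos hone).ContentRegular := by
  intro K
  refine le_antisymm (le_iInf₂ fun K' hK' => ?_) ?_
  · exact ENNReal.coe_le_coe.2 (Real.toNNReal_le_toNNReal
      (rr_mono L hadd hsmul hpos hone (hK'.trans interior_subset)))
  · refine ENNReal.le_of_forall_pos_le_add (fun ε hε _ => ?_)
    have hε' : (0:ℝ) < ε / 2 := by positivity
    obtain ⟨f, hf, hfL⟩ := rr_exists_lt L hadd hsmul hpos hone (K := (K : Set X)) hε'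
    set K' : Compacts X := ⟨{x | 1 - ε/2 ≤ f x},
      (isClosed_le (by continuity) f.continuous).isCompact⟩ with hK'def
    have hKint : (K : Set X) ⊆ interior (K' : Set X) := by
      intro x hx
      have hmem : x ∈ {y | 1 - (ε:ℝ)/2 < f y} := by
        simp only [Set.mem_setOf_eq, hf.2 x hx]
        linarith
      exact interior_maximal (fun y (hy : 1 - (ε:ℝ)/2 < f y) => le_of_lt hy)
        (isOpen_lt (by continuity) f.continuous) hmem
    have hg : (f + ((ε:ℝ)/2) • (1 : C(X,ℝ))) ⊓ 1 ∈ FF (K' : Set X) := by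
      constructor
      · intro x
        constructor
        · simp only [ContinuousMap.inf_apply, ContinuousMap.add_apply, ContinuousMap.smul_apply,
            ContinuousMap.one_apply, smul_eq_mul, mul_one, le_inf_iff]
          exact ⟨by linarith [(hf.1 x).1], zero_le_one⟩
        · simp [ContinuousMap.inf_apply]
      · intro x hx
        have hx' : 1 - (ε:ℝ)/2 ≤ f x := hx
        simp only [ContinuousMap.inf_apply, ContinuousMap.add_apply, ContinuousMap.smul_apply,
          ContinuousMap.one_apply, smul_eq_mul, mul_one]
        exact min_eq_right (by linarith)
    have hLg : L ((f + ((ε:ℝ)/2) • (1 : C(X,ℝ))) ⊓ 1) ≤ L f + (ε:ℝ)/2 := by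
      have hm : L ((f + ((ε:ℝ)/2) • (1 : C(X,ℝ))) ⊓ 1) ≤ L (f + ((ε:ℝ)/2) • (1 : C(X,ℝ))) :=
        L_mono L hadd hsmul hpos hone (fun x => by simp [ContinuousMap.inf_apply])
      rw [hadd, hsmul, hone] at hm
      linarith
    have hrrK' : rr L (K' : Set X) ≤ rr L (K : Set X) + (ε:ℝ) := by
      have := rr_le L hadd hsmul hpos hone hg
      linarith
    refine iInf_le_of_le K' (iInf_le_of_le hKint ?_)
    calc ((rieszC L hadd hsmul hpos hone).toFun K' : ℝ≥0∞)
        = (Real.toNNReal (rr L (K' : Set X)) : ℝ≥0∞) := rfl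
      _ ≤ (Real.toNNReal (rr L (K : Set X) + (ε:ℝ)) : ℝ≥0∞) := by
          exact_mod_cast Real.toNNReal_le_toNNReal hrrK'
      _ ≤ (Real.toNNReal (rr L (K : Set X)) : ℝ≥0∞) + (Real.toNNReal (ε:ℝ) : ℝ≥0∞) := by
          exact_mod_cast Real.toNNReal_add_le
      _ = ((rieszC L hadd hsmul hpos hone).toFun K : ℝ≥0∞) + (ε : ℝ≥0∞) := by
          simp [Real.toNNReal_coe]
          rfl
end RMK2

/-! Pure real auxiliary lemmas. -/

lemma sum_clamp (t : ℝ) (ht : 0 ≤ t) (n : ℕ) :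
    ∑ i ∈ Finset.range n, max (min (t - i) 1) 0 = min t n := by
  induction n with
  | zero => simp [min_eq_right ht]
  | succ n ih =>
    rw [Finset.sum_range_succ, ih]
    push_cast
    rcases le_total t n with h | h
    · have h1 : min (t - n) 1 ≤ 0 := le_trans (min_le_left _ _) (by linarith)
      rw [max_eq_right h1, min_eq_left h, min_eq_left (by linarith), add_zero]
    · have h1 : 0 ≤ min (t - n) 1 := le_min (by linarith) zero_le_one
      rw [min_eq_right h, max_eq_left h1]
      rcases le_total t (n + 1) with h2 | h2
      · rw [min_eq_left (by linarith : t - (n:ℝ) ≤ 1), min_eq_left h2]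
        ring
      · rw [min_eq_right (by linarith : (1:ℝ) ≤ t - n), min_eq_right h2]

lemma sum_indicator_threshold (t : ℝ) (ht : 0 ≤ t) (n : ℕ) :
    ∑ i ∈ Finset.range n, (if ((i : ℝ) + 1 ≤ t) then (1:ℝ) else 0)
      = ((min ⌊t⌋₊ n : ℕ) : ℝ) := by
  rw [Finset.sum_boole]
  have hfil : (Finset.range n).filter (fun i : ℕ => ((i : ℝ) + 1 ≤ t))
      = Finset.range (min ⌊t⌋₊ n) := by
    ext j
    simp only [Finset.mem_filter, Finset.mem_range, lt_min_iff]
    constructor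
    · rintro ⟨hjn, hjt⟩
      refine ⟨?_, hjn⟩
      have : (↑(j+1) : ℝ) ≤ t := by push_cast; linarith
      have := (Nat.le_floor_iff ht).2 this
      omega
    · rintro ⟨hjf, hjn⟩
      refine ⟨hjn, ?_⟩
      have : ((j+1 : ℕ) : ℝ) ≤ t := by
        have : (j+1 : ℕ) ≤ ⌊t⌋₊ := by omega
        exact le_trans (by exact_mod_cast Nat.cast_le.2 this) (Nat.floor_le ht)
      push_cast at this
      linarith
  rw [hfil, Finset.card_range]

section RMK3
open TopologicalSpace
open scoped ENNReal NNReal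
variable {X : Type*} [MetricSpace X] [CompactSpace X]
    [MeasurableSpace X] [BorelSpace X]
variable (L : C(X, ℝ) → ℝ)
variable (hadd : ∀ f g, L (f + g) = L f + L g)
    (hsmul : ∀ (c : ℝ) f, L (c • f) = c * L f)
    (hpos : ∀ f : C(X, ℝ), (∀ x, 0 ≤ f x) → 0 ≤ L f)
    (hone : L 1 = 1)

section lemmas3
include hadd hsmul hpos hone

lemma L_sum_range (g : ℕ → C(X, ℝ)) (n : ℕ) :
    L (∑ i ∈ Finset.range n, g i) = ∑ i ∈ Finset.range n, L (g i) := by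
  induction n with
  | zero => simpa using L_zero L hadd hsmul hpos hone
  | succ n ih => rw [Finset.sum_range_succ, Finset.sum_range_succ, hadd, ih]

lemma rieszC_measure_compacts (K : Set X) (hK : IsClosed K) :
    (rieszC L hadd hsmul hpos hone).measure K = ENNReal.ofReal (rr L K) := by
  have := (rieszC L hadd hsmul hpos hone).measure_eq_content_of_regular
    (rieszC_regular L hadd hsmul hpos hone) ⟨K, hK.isCompact⟩
  exact this

lemma rieszC_measure_prob :
    IsProbabilityMeasure (rieszC L hadd hsmul hpos hone).measure := by
  constructor
  rw [rieszC_measure_compacts L hadd hsmul hpos hone Set.univ isClosed_univ,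
    rr_univ L hadd hsmul hpos hone]
  simp

lemma rieszC_integral_eq (f : C(X, ℝ)) :
    ∫ x, f x ∂(rieszC L hadd hsmul hpos hone).measure = L f := by
  set μ := (rieszC L hadd hsmul hpos hone).measure with hμdef
  have hprob : IsProbabilityMeasure μ := rieszC_measure_prob L hadd hsmul hpos hone
  -- step 1 : the case of functions with values in [0,1]
  have key01 : ∀ g : C(X, ℝ), (∀ x, 0 ≤ g x ∧ g x ≤ 1) → ∫ x, g x ∂μ = L g := by
    intro g hg
    have main : ∀ n : ℕ, 0 < n → |∫ x, g x ∂μ - L g| ≤ 1 / n := by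
      intro n hn
      set Ks : ℕ → Set X := fun i => {x | (i : ℝ) ≤ n * g x} with hKsdef
      have hKscl : ∀ i, IsClosed (Ks i) := fun i =>
        isClosed_le continuous_const (continuous_const.mul g.continuous)
      have hμKs : ∀ i, (μ (Ks i)).toReal = rr L (Ks i) := by
        intro i
        rw [hμdef, rieszC_measure_compacts L hadd hsmul hpos hone _ (hKscl i),
          ENNReal.toReal_ofReal (rr_nonneg L hadd hsmul hpos hone _)]
      set S : ℝ := ∑ i ∈ Finset.range n, rr L (Ks (i+1)) with hSdef
      -- pointwise inequalities for the indicator sums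
      have hindpt : ∀ x, (∑ i ∈ Finset.range n, (Ks (i+1)).indicator (fun _ => (1:ℝ)) x)
          = ((min ⌊(n : ℝ) * g x⌋₊ n : ℕ) : ℝ) := by
        intro x
        have ht : (0:ℝ) ≤ n * g x := mul_nonneg (Nat.cast_nonneg n) (hg x).1
        rw [← sum_indicator_threshold ((n : ℝ) * g x) ht n]
        refine Finset.sum_congr rfl (fun i _ => ?_)
        rw [Set.indicator_apply]
        congr 1
        · simp only [hKsdef, Set.mem_setOf_eq, eq_iff_iff]
          push_cast
          constructor <;> intro h <;> linarith
      have hptlow : ∀ x, (∑ i ∈ Finset.range n, (Ks (i+1)).indicator (fun _ => (1:ℝ)) x)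
          ≤ (n : ℝ) * g x := by
        intro x
        rw [hindpt x]
        have ht : (0:ℝ) ≤ n * g x := mul_nonneg (Nat.cast_nonneg n) (hg x).1
        calc ((min ⌊(n : ℝ) * g x⌋₊ n : ℕ) : ℝ) ≤ ((⌊(n : ℝ) * g x⌋₊ : ℕ) : ℝ) := by
              exact_mod_cast Nat.cast_le.2 (min_le_left _ _)
          _ ≤ (n : ℝ) * g x := Nat.floor_le ht
      have hpthigh : ∀ x, (n : ℝ) * g x
          ≤ 1 + ∑ i ∈ Finset.range n, (Ks (i+1)).indicator (fun _ => (1:ℝ)) x := by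
        intro x
        rw [hindpt x]
        have ht : (0:ℝ) ≤ n * g x := mul_nonneg (Nat.cast_nonneg n) (hg x).1
        have htn : (n : ℝ) * g x ≤ n := by
          calc (n : ℝ) * g x ≤ n * 1 := by
                exact mul_le_mul_of_nonneg_left (hg x).2 (Nat.cast_nonneg n)
            _ = n := mul_one _
        have hfl : ⌊(n : ℝ) * g x⌋₊ ≤ n := by
          have := Nat.floor_le_of_le htn
          simpa using this
        rw [min_eq_left hfl]
        have := Nat.lt_floor_add_one ((n : ℝ) * g x)
        linarith
      -- integral inequalities
      have hind_int : ∀ i : ℕ, Integrable ((Ks (i+1)).indicator (fun _ => (1:ℝ))) μ :=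
        fun i => (integrable_const (1:ℝ)).indicator (hKscl (i+1)).measurableSet
      have hgsum_int : Integrable
          (fun x => ∑ i ∈ Finset.range n, (Ks (i+1)).indicator (fun _ => (1:ℝ)) x) μ :=
        integrable_finset_sum _ (fun i _ => hind_int i)
      have hg_int : Integrable (fun x => g x) μ := cont_integrable μ g.continuous
      have hsum_integral : ∫ x, (∑ i ∈ Finset.range n, (Ks (i+1)).indicator (fun _ => (1:ℝ)) x) ∂μ
          = S := by
        rw [integral_finset_sum _ (fun i _ => hind_int i), hSdef]
        refine Finset.sum_congr rfl (fun i _ => ?_)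
        rw [integral_indicator_const (1:ℝ) (hKscl (i+1)).measurableSet, smul_eq_mul, mul_one]
        exact hμKs (i+1)
      have hIlow : S ≤ (n : ℝ) * ∫ x, g x ∂μ := by
        have := integral_mono hgsum_int (hg_int.const_mul (n:ℝ)) hptlow
        rw [hsum_integral] at this
        rwa [integral_const_mul] at this
      have hIhigh : (n : ℝ) * ∫ x, g x ∂μ ≤ 1 + S := by
        have hptsub : (fun x => (n:ℝ) * g x
            - ∑ i ∈ Finset.range n, (Ks (i+1)).indicator (fun _ => (1:ℝ)) x)
            ≤ (fun _ => (1:ℝ)) := by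
          intro x
          have := hpthigh x
          simp only
          linarith
        have hmono : ∫ x, ((n:ℝ) * g x
              - ∑ i ∈ Finset.range n, (Ks (i+1)).indicator (fun _ => (1:ℝ)) x) ∂μ
            ≤ ∫ _x, (1:ℝ) ∂μ :=
          integral_mono ((hg_int.const_mul (n:ℝ)).sub hgsum_int)
            (integrable_const (1:ℝ)) hptsub
        rw [integral_sub (hg_int.const_mul (n:ℝ)) hgsum_int, hsum_integral,
          integral_const, integral_const_mul] at hmono
        simp only [measure_univ, ENNReal.toReal_one, probReal_univ, smul_eq_mul, one_mul] at hmono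
        linarith
      -- L inequalities
      set fs : ℕ → C(X, ℝ) := fun i => (((n:ℝ) • g - (i:ℝ) • 1) ⊓ 1) ⊔ 0 with hfsdef
      have hfs_apply : ∀ i x, fs i x = max (min ((n:ℝ) * g x - i) 1) 0 := by
        intro i x
        simp [hfsdef, ContinuousMap.sup_apply, ContinuousMap.inf_apply]
      have hfs_sum : (∑ i ∈ Finset.range n, fs i) = (n : ℝ) • g := by
        ext x
        rw [ContinuousMap.sum_apply]
        have ht : (0:ℝ) ≤ n * g x := mul_nonneg (Nat.cast_nonneg n) (hg x).1
        have htn : (n : ℝ) * g x ≤ n := by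
          calc (n : ℝ) * g x ≤ n * 1 := mul_le_mul_of_nonneg_left (hg x).2 (Nat.cast_nonneg n)
            _ = n := mul_one _
        calc ∑ i ∈ Finset.range n, fs i x
            = ∑ i ∈ Finset.range n, max (min ((n:ℝ) * g x - i) 1) 0 :=
              Finset.sum_congr rfl (fun i _ => hfs_apply i x)
          _ = min ((n:ℝ) * g x) n := sum_clamp _ ht n
          _ = (n:ℝ) * g x := min_eq_left htn
          _ = ((n : ℝ) • g) x := by simp
      have hfs_memFF : ∀ i, fs i ∈ FF (Ks (i+1)) := by
        intro i
        constructor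
        · intro x
          rw [hfs_apply i x]
          exact ⟨le_max_right _ _, max_le (min_le_right _ _) zero_le_one⟩
        · intro x hx
          have hx' : ((i:ℝ) + 1) ≤ (n:ℝ) * g x := by
            have : ((i + 1 : ℕ) : ℝ) ≤ (n:ℝ) * g x := hx
            push_cast at this; linarith
          rw [hfs_apply i x, min_eq_right (by linarith), max_eq_left zero_le_one]
      have hrr_le_fs : ∀ i, rr L (Ks (i+1)) ≤ L (fs i) :=
        fun i => rr_le L hadd hsmul hpos hone (hfs_memFF i)
      have hfs_le_rr : ∀ i, L (fs i) ≤ rr L (Ks i) := by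
        intro i
        refine le_rr L hadd hsmul hpos hone (fun h hh => ?_)
        refine L_mono L hadd hsmul hpos hone (fun x => ?_)
        by_cases hx : x ∈ Ks i
        · rw [hh.2 x hx, hfs_apply i x]
          exact max_le (min_le_right _ _) zero_le_one
        · have hx' : (n:ℝ) * g x < i := by
            simp only [hKsdef, Set.mem_setOf_eq, not_le] at hx
            exact hx
          rw [hfs_apply i x, max_eq_right (le_trans (min_le_left _ _) (by linarith))]
          exact (hh.1 x).1
      have hLsum : (n : ℝ) * L g = ∑ i ∈ Finset.range n, L (fs i) := by
        rw [← L_sum_range L hadd hsmul hpos hone fs n, hfs_sum, hsmul]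
      have hLlow : S ≤ (n : ℝ) * L g := by
        rw [hLsum, hSdef]
        exact Finset.sum_le_sum (fun i _ => hrr_le_fs i)
      have hLhigh : (n : ℝ) * L g ≤ 1 + S := by
        rw [hLsum]
        have h1 : ∑ i ∈ Finset.range n, L (fs i) ≤ ∑ i ∈ Finset.range n, rr L (Ks i) :=
          Finset.sum_le_sum (fun i _ => hfs_le_rr i)
        have h2 : ∑ i ∈ Finset.range n, (rr L (Ks i) - rr L (Ks (i+1)))
            = rr L (Ks 0) - rr L (Ks n) := Finset.sum_range_sub' (fun i => rr L (Ks i)) n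
        rw [Finset.sum_sub_distrib] at h2
        have h3 := rr_le_one L hadd hsmul hpos hone (Ks 0)
        have h4 := rr_nonneg L hadd hsmul hpos hone (Ks n)
        rw [hSdef]
        linarith
      -- combine
      have hnpos : (0:ℝ) < n := Nat.cast_pos.2 hn
      rw [abs_le]
      constructor
      · rw [neg_le]
        rw [le_div_iff₀ hnpos]
        nlinarith
      · rw [le_div_iff₀ hnpos]
        nlinarith
    have hlim : Filter.Tendsto (fun n : ℕ => 1 / (n:ℝ)) Filter.atTop (nhds 0) :=
      tendsto_one_div_atTop_nhds_zero_nat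
    have habs : |∫ x, g x ∂μ - L g| ≤ 0 := by
      refine ge_of_tendsto hlim ?_
      filter_upwards [Filter.eventually_ge_atTop 1] with n hn
      exact main n hn
    exact sub_eq_zero.1 (abs_eq_zero.1 (le_antisymm habs (abs_nonneg _)))
  -- step 2 : general f by scaling
  set M : ℝ := ‖BoundedContinuousFunction.mkOfCompact f‖ with hMdef
  have hM0 : 0 ≤ M := norm_nonneg _
  have hMb : ∀ x, |f x| ≤ M := fun x =>
    BoundedContinuousFunction.norm_coe_le_norm (BoundedContinuousFunction.mkOfCompact f) x
  have hden : (0:ℝ) < 2*M+1 := by linarith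
  set g : C(X, ℝ) := (2*M+1)⁻¹ • (f + M • (1 : C(X,ℝ))) with hgdef
  have hg01 : ∀ x, 0 ≤ g x ∧ g x ≤ 1 := by
    intro x
    have h1 := abs_le.1 (hMb x)
    constructor
    · simp only [hgdef, ContinuousMap.smul_apply, ContinuousMap.add_apply,
        ContinuousMap.one_apply, smul_eq_mul, mul_one]
      have : (0:ℝ) ≤ f x + M := by linarith [h1.1]
      positivity
    · simp only [hgdef, ContinuousMap.smul_apply, ContinuousMap.add_apply,
        ContinuousMap.one_apply, smul_eq_mul, mul_one]
      rw [inv_mul_le_iff₀ hden, mul_one]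
      linarith [h1.2]
  have hfg : f = (2*M+1) • g - M • (1 : C(X,ℝ)) := by
    rw [hgdef, smul_smul, mul_inv_cancel₀ (ne_of_gt hden), one_smul]
    ext x
    simp
  have hg_int : Integrable (fun x => g x) μ := cont_integrable μ g.continuous
  have hint : ∫ x, f x ∂μ = (2*M+1) * (∫ x, g x ∂μ) - M := by
    conv_lhs => rw [hfg]
    have : ∀ x : X, ((2*M+1) • g - M • (1 : C(X,ℝ))) x = (2*M+1) * g x - M := by
      intro x; simp
    rw [integral_congr_ae (Filter.Eventually.of_forall this)]
    rw [integral_sub (hg_int.const_mul _) (integrable_const M), integral_const_mul,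
      integral_const]
    simp [measure_univ]
  have hLf : L f = (2*M+1) * L g - M := by
    have hfg2 : f = (2*M+1) • g + (-M) • (1 : C(X,ℝ)) := by
      rw [hfg]; ext x; simp; ring
    calc L f = L ((2*M+1) • g + (-M) • (1:C(X,ℝ))) := by rw [← hfg2]
      _ = L ((2*M+1) • g) + L ((-M) • (1:C(X,ℝ))) := hadd _ _
      _ = (2*M+1) * L g + (-M) * L 1 := by rw [hsmul (-M) 1, hsmul (2*M+1) g]
      _ = (2*M+1) * L g - M := by rw [hone]; ring
  rw [hint, hLf, key01 g hg01]
end lemmas3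
end RMK3

/-! ### Log averages and the ultrafilter-limit construction -/

lemma H_pos {n : ℕ} (hn : 1 ≤ n) : 0 < H n := by
  unfold H
  apply Finset.sum_pos (fun k _ => by positivity)
  exact ⟨0, Finset.mem_range.2 hn⟩

lemma H_nonneg (n : ℕ) : 0 ≤ H n :=
  Finset.sum_nonneg (fun k _ => by positivity)

lemma H_atTop : Filter.Tendsto H Filter.atTop Filter.atTop :=
  Real.tendsto_sum_range_one_div_nat_succ_atTop

section logAvg
variable {X : Type*} [MetricSpace X]

/-- The logarithmically weighted ergodic average. -/
noncomputable def logAvg (T : X → X) (f : C(X, ℝ)) (n : ℕ) (x : X) : ℝ :=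
  (1 / H n) * ∑ k ∈ Finset.range n, (1 / (k + 1 : ℝ)) * f (T^[k] x)

variable {T : X → X}

lemma logAvg_sum_bound {f : C(X, ℝ)} {M : ℝ} (hM : ∀ y, |f y| ≤ M) (n : ℕ) (x : X) :
    |∑ k ∈ Finset.range n, (1 / (k + 1 : ℝ)) * f (T^[k] x)| ≤ H n * M := by
  calc |∑ k ∈ Finset.range n, (1 / (k + 1 : ℝ)) * f (T^[k] x)|
      ≤ ∑ k ∈ Finset.range n, |(1 / (k + 1 : ℝ)) * f (T^[k] x)| :=
        Finset.abs_sum_le_sum_abs _ _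
    _ ≤ ∑ k ∈ Finset.range n, (1 / (k + 1 : ℝ)) * M := by
        refine Finset.sum_le_sum (fun k _ => ?_)
        rw [abs_mul, abs_of_nonneg (by positivity : (0:ℝ) ≤ 1 / (k + 1 : ℝ))]
        exact mul_le_mul_of_nonneg_left (hM _) (by positivity)
    _ = H n * M := by rw [← Finset.sum_mul]; rfl

lemma logAvg_bound {f : C(X, ℝ)} {M : ℝ} (hM : ∀ y, |f y| ≤ M) (hM0 : 0 ≤ M)
    (n : ℕ) (x : X) : |logAvg T f n x| ≤ M := by
  rcases Nat.eq_zero_or_pos n with rfl | hn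
  · simp [logAvg, H, hM0]
  · have hH := H_pos hn
    rw [logAvg, abs_mul, abs_of_nonneg (by positivity : (0:ℝ) ≤ 1 / H n)]
    calc 1 / H n * |∑ k ∈ Finset.range n, (1 / (k + 1 : ℝ)) * f (T^[k] x)|
        ≤ 1 / H n * (H n * M) :=
          mul_le_mul_of_nonneg_left (logAvg_sum_bound hM n x) (by positivity)
      _ = M := by field_simp
lemma logAvg_add (f g : C(X, ℝ)) (n : ℕ) (x : X) :
    logAvg T (f + g) n x = logAvg T f n x + logAvg T g n x := by
  simp only [logAvg, ContinuousMap.add_apply]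
  rw [← mul_add, ← Finset.sum_add_distrib]
  congr 1
  exact Finset.sum_congr rfl (fun k _ => by ring)

lemma logAvg_smul (c : ℝ) (f : C(X, ℝ)) (n : ℕ) (x : X) :
    logAvg T (c • f) n x = c * logAvg T f n x := by
  simp only [logAvg, ContinuousMap.smul_apply, smul_eq_mul]
  rw [show (∑ k ∈ Finset.range n, (1 / (k + 1 : ℝ)) * (c * f (T^[k] x)))
      = c * ∑ k ∈ Finset.range n, (1 / (k + 1 : ℝ)) * f (T^[k] x) from by
    rw [Finset.mul_sum]; exact Finset.sum_congr rfl (fun k _ => by ring)]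
  ring

lemma logAvg_one {n : ℕ} (hn : 1 ≤ n) (x : X) : logAvg T (1 : C(X, ℝ)) n x = 1 := by
  have hH := H_pos hn
  simp only [logAvg, ContinuousMap.one_apply, mul_one]
  rw [show ∑ k ∈ Finset.range n, (1 / (k + 1 : ℝ)) = H n from rfl]
  field_simp

lemma logAvg_nonneg {f : C(X, ℝ)} (hf : ∀ y, 0 ≤ f y) (n : ℕ) (x : X) :
    0 ≤ logAvg T f n x := by
  have h1 : (0:ℝ) ≤ 1 / H n := by
    have := H_nonneg n; positivity
  refine mul_nonneg h1 (Finset.sum_nonneg (fun k _ => mul_nonneg (by positivity) (hf _)))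

lemma logAvg_comp_sub (hT : Continuous T) {f : C(X, ℝ)} {M : ℝ}
    (hM : ∀ y, |f y| ≤ M) (hM0 : 0 ≤ M) {n : ℕ} (hn : 1 ≤ n) (x : X) :
    |logAvg T (f.comp ⟨T, hT⟩) n x - logAvg T f n x| ≤ 2 * M / H n := by
  obtain ⟨m, rfl⟩ := Nat.exists_eq_add_of_le hn
  set N := 1 + m with hN
  have hH := H_pos (le_refl 1 |>.trans (Nat.le_add_right 1 m))
  set c : ℕ → ℝ := fun k => 1 / (k + 1 : ℝ) with hc
  set g : ℕ → ℝ := fun k => f (T^[k] x) with hg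
  have hcomp : ∀ k, (f.comp ⟨T, hT⟩) (T^[k] x) = g (k + 1) := by
    intro k
    simp only [ContinuousMap.comp_apply, ContinuousMap.coe_mk, hg]
    rw [Function.iterate_succ_apply' T k x]
  have hkey : (∑ k ∈ Finset.range N, c k * g (k+1)) - (∑ k ∈ Finset.range N, c k * g k)
      = (∑ k ∈ Finset.range m, (c k - c (k+1)) * g (k+1)) + c m * g (m+1) - c 0 * g 0 := by
    have hs : ∑ k ∈ Finset.range m, (c k - c (k+1)) * g (k+1)
        = (∑ k ∈ Finset.range m, c k * g (k+1)) - ∑ k ∈ Finset.range m, c (k+1) * g (k+1) := by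
      rw [← Finset.sum_sub_distrib]
      exact Finset.sum_congr rfl (fun k _ => by ring)
    rw [hN, show 1 + m = m + 1 from by omega]
    rw [Finset.sum_range_succ (fun k => c k * g (k+1)) m,
      Finset.sum_range_succ' (fun k => c k * g k) m, hs]
    ring
  have hcmono : ∀ k, 0 ≤ c k - c (k+1) := by
    intro k
    have : (1:ℝ) / (k + 1 + 1) ≤ 1 / (k + 1) := by
      apply one_div_le_one_div_of_le <;> push_cast <;> [positivity; linarith]
    simp only [hc]
    push_cast
    linarith
  have hbound : |(∑ k ∈ Finset.range N, c k * g (k+1)) - (∑ k ∈ Finset.range N, c k * g k)|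
      ≤ 2 * M := by
    rw [hkey]
    have h1 : |∑ k ∈ Finset.range m, (c k - c (k+1)) * g (k+1)|
        ≤ ∑ k ∈ Finset.range m, (c k - c (k+1)) * M := by
      refine le_trans (Finset.abs_sum_le_sum_abs _ _) (Finset.sum_le_sum (fun k _ => ?_))
      rw [abs_mul, abs_of_nonneg (hcmono k)]
      exact mul_le_mul_of_nonneg_left (hM _) (hcmono k)
    have h2 : ∑ k ∈ Finset.range m, (c k - c (k+1)) * M = (c 0 - c m) * M := by
      rw [← Finset.sum_mul, Finset.sum_range_sub' c m]
    have hc0 : c 0 = 1 := by simp [hc]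
    have hcm0 : 0 ≤ c m := by simp only [hc]; positivity
    have hcm1 : c m ≤ 1 := by
      simp only [hc]
      rw [div_le_one (by positivity)]
      push_cast; linarith
    have h3 : |c m * g (m+1)| ≤ c m * M := by
      rw [abs_mul, abs_of_nonneg hcm0]
      exact mul_le_mul_of_nonneg_left (hM _) hcm0
    have h4 : |c 0 * g 0| ≤ M := by
      rw [hc0, one_mul]; exact hM _
    calc |(∑ k ∈ Finset.range m, (c k - c (k+1)) * g (k+1)) + c m * g (m+1) - c 0 * g 0|
        ≤ |∑ k ∈ Finset.range m, (c k - c (k+1)) * g (k+1)| + |c m * g (m+1)| + |c 0 * g 0| := by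
          calc |(∑ k ∈ Finset.range m, (c k - c (k+1)) * g (k+1)) + c m * g (m+1) - c 0 * g 0|
              ≤ |(∑ k ∈ Finset.range m, (c k - c (k+1)) * g (k+1)) + c m * g (m+1)| + |c 0 * g 0| :=
                abs_sub _ _
            _ ≤ _ := by
                have := abs_add_le (∑ k ∈ Finset.range m, (c k - c (k+1)) * g (k+1)) (c m * g (m+1))
                linarith
      _ ≤ (c 0 - c m) * M + c m * M + M := by
          have := le_trans h1 (le_of_eq h2)
          linarith
      _ = 2 * M := by rw [hc0]; ring
  have hlhs : logAvg T (f.comp ⟨T, hT⟩) N x - logAvg T f N x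
      = (1 / H N) * ((∑ k ∈ Finset.range N, c k * g (k+1))
        - (∑ k ∈ Finset.range N, c k * g k)) := by
    simp only [logAvg, mul_sub]
    congr 2
    exact Finset.sum_congr rfl (fun k _ => by rw [hcomp k])
  rw [hlhs, abs_mul, abs_of_nonneg (by positivity : (0:ℝ) ≤ 1 / H N)]
  refine le_trans (mul_le_mul_of_nonneg_left hbound (by positivity : (0:ℝ) ≤ 1 / H N))
    (le_of_eq (by ring))

end logAvg

section Core
open Filter
variable {X : Type*} [MetricSpace X] [CompactSpace X] [Nonempty X]
    [MeasurableSpace X] [BorelSpace X]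

lemma prob_meas_ext (μ ν : Measure X) [IsProbabilityMeasure μ] [IsProbabilityMeasure ν]
    (h : ∀ f : C(X, ℝ), ∫ x, f x ∂μ = ∫ x, f x ∂ν) : μ = ν := by
  apply ext_of_forall_lintegral_eq_of_IsFiniteMeasure
  intro f
  have hc : Continuous fun x => ((f x : ℝ)) := NNReal.continuous_coe.comp f.continuous
  rw [lintegral_coe_eq_integral f (cont_integrable μ hc),
    lintegral_coe_eq_integral f (cont_integrable ν hc)]
  congr 1
  exact h ⟨fun x => (f x : ℝ), hc⟩

theorem exists_invariant_limit (T : X → X) (hT : Continuous T) (x : ℕ → X)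
    (𝒰 : Ultrafilter ℕ) (h𝒰 : (𝒰 : Filter ℕ) ≤ atTop) :
    ∃ ν : Measure X, IsProbabilityMeasure ν ∧ Measure.map T ν = ν ∧
      ∀ f : C(X, ℝ), Tendsto (fun n => logAvg T f n (x n)) 𝒰 (nhds (∫ y, f y ∂ν)) := by
  have hMb : ∀ f : C(X, ℝ), ∀ y, |f y| ≤ ‖BoundedContinuousFunction.mkOfCompact f‖ :=
    fun f y => BoundedContinuousFunction.norm_coe_le_norm (BoundedContinuousFunction.mkOfCompact f) y
  have hex : ∀ f : C(X, ℝ), ∃ c : ℝ, Tendsto (fun n => logAvg T f n (x n)) 𝒰 (nhds c) := by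
    intro f
    set M := ‖BoundedContinuousFunction.mkOfCompact f‖ with hM
    have hmem : ∀ n, logAvg T f n (x n) ∈ Set.Icc (-M) M :=
      fun n => abs_le.1 (logAvg_bound (hMb f) (norm_nonneg _) n (x n))
    obtain ⟨c, -, hc⟩ := (isCompact_Icc (a := -M) (b := M)).ultrafilter_le_nhds
      (𝒰.map (fun n => logAvg T f n (x n)))
      (by
        rw [Ultrafilter.coe_map, Filter.le_principal_iff]
        exact Filter.mem_map.2 (Filter.univ_mem' (fun n => hmem n)))
    exact ⟨c, by rwa [Ultrafilter.coe_map] at hc⟩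
  choose L hL using hex
  have hadd : ∀ f g, L (f + g) = L f + L g := by
    intro f g
    refine tendsto_nhds_unique (hL (f + g)) ?_
    have := (hL f).add (hL g)
    refine this.congr (fun n => (logAvg_add f g n (x n)).symm)
  have hsmul : ∀ (c : ℝ) f, L (c • f) = c * L f := by
    intro c f
    refine tendsto_nhds_unique (hL (c • f)) ?_
    exact ((hL f).const_mul c).congr (fun n => (logAvg_smul c f n (x n)).symm)
  have hpos : ∀ f : C(X, ℝ), (∀ y, 0 ≤ f y) → 0 ≤ L f := by
    intro f hf
    exact ge_of_tendsto' (hL f) (fun n => logAvg_nonneg hf n (x n))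
  have hone : L 1 = 1 := by
    refine tendsto_nhds_unique (hL 1) ?_
    refine Tendsto.congr' ?_ (tendsto_const_nhds (x := (1:ℝ)))
    have : ∀ᶠ n in (𝒰 : Filter ℕ), 1 ≤ n := h𝒰 (eventually_ge_atTop 1)
    filter_upwards [this] with n hn
    exact (logAvg_one hn (x n)).symm
  have hcomp : ∀ f : C(X, ℝ), L (f.comp ⟨T, hT⟩) = L f := by
    intro f
    refine tendsto_nhds_unique (hL (f.comp ⟨T, hT⟩)) ?_
    set M := ‖BoundedContinuousFunction.mkOfCompact f‖ with hM
    have hdiff : Tendsto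
        (fun n => logAvg T (f.comp ⟨T, hT⟩) n (x n) - logAvg T f n (x n)) atTop (nhds 0) := by
      apply squeeze_zero_norm' (a := fun n => 2 * M / H n)
      · filter_upwards [eventually_ge_atTop 1] with n hn
        exact logAvg_comp_sub hT (hMb f) (norm_nonneg _) hn (x n)
      · exact Filter.Tendsto.div_atTop tendsto_const_nhds H_atTop
    have h2 : Tendsto
        (fun n => logAvg T (f.comp ⟨T, hT⟩) n (x n) - logAvg T f n (x n)) 𝒰 (nhds 0) :=
      hdiff.mono_left h𝒰
    have := h2.add (hL f)
    rw [zero_add] at this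
    exact this.congr (fun n => by ring)
  refine ⟨(rieszC L hadd hsmul hpos hone).measure,
    rieszC_measure_prob L hadd hsmul hpos hone, ?_, ?_⟩
  · haveI : IsProbabilityMeasure (rieszC L hadd hsmul hpos hone).measure :=
      rieszC_measure_prob L hadd hsmul hpos hone
    haveI : IsProbabilityMeasure
        (Measure.map T (rieszC L hadd hsmul hpos hone).measure) :=
      Measure.isProbabilityMeasure_map hT.measurable.aemeasurable
    refine prob_meas_ext _ _ (fun f => ?_)
    calc ∫ y, f y ∂(Measure.map T (rieszC L hadd hsmul hpos hone).measure)
        = ∫ y, f (T y) ∂(rieszC L hadd hsmul hpos hone).measure :=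
          integral_map hT.measurable.aemeasurable f.continuous.aestronglyMeasurable
      _ = ∫ y, (f.comp ⟨T, hT⟩) y ∂(rieszC L hadd hsmul hpos hone).measure := rfl
      _ = L (f.comp ⟨T, hT⟩) := rieszC_integral_eq L hadd hsmul hpos hone _
      _ = L f := hcomp f
      _ = ∫ y, f y ∂(rieszC L hadd hsmul hpos hone).measure :=
          (rieszC_integral_eq L hadd hsmul hpos hone f).symm
  · intro f
    rw [rieszC_integral_eq L hadd hsmul hpos hone f]
    exact hL f

end Core

section Main
open Filter
variable {X : Type*} [MetricSpace X] [CompactSpace X] [Nonempty X]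
    [MeasurableSpace X] [BorelSpace X]

lemma invariant_iff_map (T : X → X) (hT : Continuous T) (ν : ProbabilityMeasure X) :
    IsInvariantMeasure T ν ↔ Measure.map T (ν : Measure X) = (ν : Measure X) := by
  constructor
  · intro h
    ext B hB
    rw [Measure.map_apply hT.measurable hB]
    have h2 := congrArg (fun r : NNReal => (r : ENNReal)) (h B hB)
    simpa [ProbabilityMeasure.ennreal_coeFn_eq_coeFn_toMeasure] using h2
  · intro h B hB
    have e1 : (ν : Measure X) (T ⁻¹' B) = (ν : Measure X) B := by
      rw [← Measure.map_apply hT.measurable hB, h]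
    have := congrArg ENNReal.toNNReal e1
    simpa [ProbabilityMeasure.coeFn_def] using this

lemma integral_iterate (T : X → X) (hT : Continuous T) (ν : Measure X)
    [IsProbabilityMeasure ν] (hmap : Measure.map T ν = ν) (f : C(X, ℝ)) (k : ℕ) :
    ∫ y, f (T^[k] y) ∂ν = ∫ y, f y ∂ν := by
  induction k with
  | zero => simp
  | succ k ih =>
    have hc : Continuous fun z => f (T^[k] z) := f.continuous.comp (hT.iterate k)
    calc ∫ y, f (T^[k+1] y) ∂ν = ∫ y, f (T^[k] (T y)) ∂ν := by
          simp only [Function.iterate_succ_apply]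
      _ = ∫ z, f (T^[k] z) ∂(Measure.map T ν) :=
          (integral_map hT.measurable.aemeasurable hc.aestronglyMeasurable).symm
      _ = ∫ z, f (T^[k] z) ∂ν := by rw [hmap]
      _ = ∫ y, f y ∂ν := ih

lemma integral_logAvg (T : X → X) (hT : Continuous T) (ν : Measure X)
    [IsProbabilityMeasure ν] (hmap : Measure.map T ν = ν) (f : C(X, ℝ)) {n : ℕ}
    (hn : 1 ≤ n) : ∫ y, logAvg T f n y ∂ν = ∫ y, f y ∂ν := by
  have hint : ∀ k : ℕ, Integrable (fun y => (1 / (k + 1 : ℝ)) * f (T^[k] y)) ν :=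
    fun k => (cont_integrable ν (f.continuous.comp (hT.iterate k))).const_mul _
  calc ∫ y, logAvg T f n y ∂ν
      = (1 / H n) * ∫ y, (∑ k ∈ Finset.range n, (1 / (k + 1 : ℝ)) * f (T^[k] y)) ∂ν := by
        rw [← integral_const_mul]; rfl
    _ = (1 / H n) * ∑ k ∈ Finset.range n, ∫ y, (1 / (k + 1 : ℝ)) * f (T^[k] y) ∂ν := by
        rw [integral_finset_sum _ (fun k _ => hint k)]
    _ = (1 / H n) * ∑ k ∈ Finset.range n, (1 / (k + 1 : ℝ)) * ∫ y, f y ∂ν := by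
        congr 1
        refine Finset.sum_congr rfl (fun k _ => ?_)
        rw [integral_const_mul, integral_iterate T hT ν hmap f k]
    _ = ∫ y, f y ∂ν := by
        rw [← Finset.sum_mul, show (∑ k ∈ Finset.range n, (1 / (k + 1 : ℝ))) = H n from rfl]
        have := H_pos hn
        field_simp

lemma integral_eq_const (T : X → X) (hT : Continuous T) (f : C(X, ℝ)) (c : ℝ)
    (hc : TendstoUniformly (fun (n : ℕ) (y : X) => logAvg T f n y) (fun _ => c) atTop)
    (ν : Measure X) [IsProbabilityMeasure ν] (hmap : Measure.map T ν = ν) :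
    ∫ y, f y ∂ν = c := by
  have key : ∀ ε > (0:ℝ), |∫ y, f y ∂ν - c| ≤ ε := by
    intro ε hε
    rw [Metric.tendstoUniformly_iff] at hc
    obtain ⟨n, hn⟩ := ((hc ε hε).and (eventually_ge_atTop 1)).exists
    have hcontA : Continuous fun y => logAvg T f n y := by
      apply continuous_const.mul
      exact continuous_finset_sum _ (fun k _ => continuous_const.mul
        (f.continuous.comp (hT.iterate k)))
    have hintA : Integrable (fun y => logAvg T f n y) ν := cont_integrable ν hcontA
    have h1 : ∫ y, logAvg T f n y ∂ν = ∫ y, f y ∂ν :=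
      integral_logAvg T hT ν hmap f hn.2
    have h2 : ‖∫ y, (logAvg T f n y - c) ∂ν‖ ≤ ε * ((ν Set.univ)).toReal := by
      refine norm_integral_le_of_norm_le_const (Filter.Eventually.of_forall (fun y => ?_))
      have := hn.1 y
      rw [Real.dist_eq] at this
      rw [Real.norm_eq_abs, abs_sub_comm]
      exact le_of_lt this
    rw [integral_sub hintA (integrable_const c), h1, integral_const] at h2
    simp only [measure_univ, ENNReal.toReal_one, probReal_univ, smul_eq_mul, one_mul, mul_one,
      Real.norm_eq_abs] at h2
    exact h2
  have h0 : |∫ y, f y ∂ν - c| ≤ 0 :=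
    le_of_forall_pos_le_add (fun ε hε => by simpa using key ε hε)
  exact sub_eq_zero.1 (abs_eq_zero.1 (le_antisymm h0 (abs_nonneg _)))

end Main


/-- `(X,T)` is uniquely ergodic if and only if for every continuous `f : X → ℝ` there is a
constant `c` such that the functions `x ↦ (1/H_n) ∑_{k=1}^n (1/k) f(T^{k-1}x)` converge
uniformly on `X` to `c` as `n → ∞`. -/
theorem uniquelyErgodic_iff_log_averages_converge_uniformly
    {X : Type*} [MetricSpace X] [CompactSpace X] [Nonempty X]
    [MeasurableSpace X] [BorelSpace X]
    (T : X → X) (hT : Continuous T) :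
    (∃ μ : ProbabilityMeasure X, {ν : ProbabilityMeasure X | IsInvariantMeasure T ν} = {μ}) ↔
    ∀ f : C(X, ℝ), ∃ c : ℝ,
      TendstoUniformly
        (fun (n : ℕ) (x : X) =>
          (1 / H n) * ∑ k ∈ Finset.range n, (1 / (k + 1 : ℝ)) * f (T^[k] x))
        (fun _ => c) atTop := by
  classical
  have hrepr : ∀ f : C(X, ℝ),
      (fun (n : ℕ) (x : X) =>
        (1 / H n) * ∑ k ∈ Finset.range n, (1 / (k + 1 : ℝ)) * f (T^[k] x))
      = fun (n : ℕ) (x : X) => logAvg T f n x := fun _ => rfl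
  constructor
  · rintro ⟨μ, hset⟩ f
    have hμinv : IsInvariantMeasure T μ := by
      have : μ ∈ ({μ} : Set (ProbabilityMeasure X)) := Set.mem_singleton _
      rw [← hset] at this
      exact this
    refine ⟨∫ y, f y ∂(μ : Measure X), ?_⟩
    rw [hrepr f]
    by_contra hnot
    rw [Metric.tendstoUniformly_iff] at hnot
    push_neg at hnot
    obtain ⟨ε, hε, hfreq⟩ := hnot
    set c := ∫ y, f y ∂(μ : Measure X) with hcdef
    set S : Set ℕ := {n | ∃ y : X, ε ≤ dist c (logAvg T f n y)} with hS
    have hfreq' : ∃ᶠ n in atTop, n ∈ S := by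
      refine hfreq.mono (fun n hn => ?_)
      exact hn
    have hne : (atTop ⊓ Filter.principal S).NeBot := by
      rw [← Filter.frequently_iff_neBot]
      exact hfreq'
    obtain ⟨𝒰, h𝒰⟩ := Filter.exists_ultrafilter_le (atTop ⊓ Filter.principal S)
    have h𝒰top : (𝒰 : Filter ℕ) ≤ atTop := h𝒰.trans inf_le_left
    have h𝒰S : ∀ᶠ n in (𝒰 : Filter ℕ), n ∈ S :=
      Filter.le_principal_iff.1 (h𝒰.trans inf_le_right)
    set w : ℕ → X := fun n => if h : n ∈ S then h.choose else Classical.arbitrary X with hw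
    have hwspec : ∀ n ∈ S, ε ≤ dist c (logAvg T f n (w n)) := by
      intro n hn
      have : w n = hn.choose := by rw [hw]; exact dif_pos hn
      rw [this]
      exact hn.choose_spec
    obtain ⟨ν, hνp, hνmap, hνlim⟩ := exists_invariant_limit T hT w 𝒰 h𝒰top
    have hν' : (⟨ν, hνp⟩ : ProbabilityMeasure X)
        ∈ {ν' : ProbabilityMeasure X | IsInvariantMeasure T ν'} :=
      (invariant_iff_map T hT _).2 hνmap
    rw [hset] at hν'
    have hνμ : ν = (μ : Measure X) :=
      congrArg ProbabilityMeasure.toMeasure (Set.mem_singleton_iff.1 hν')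
    have hclosed : IsClosed {y : ℝ | ε ≤ dist c y} :=
      isClosed_le continuous_const (Continuous.dist continuous_const continuous_id)
    have hmem : ∫ y, f y ∂ν ∈ {y : ℝ | ε ≤ dist c y} :=
      hclosed.mem_of_tendsto (hνlim f)
        (by filter_upwards [h𝒰S] with n hn; exact hwspec n hn)
    rw [hνμ] at hmem
    simp only [Set.mem_setOf_eq, ← hcdef, dist_self] at hmem
    linarith
  · intro hconv
    obtain ⟨𝒰, h𝒰⟩ := Filter.exists_ultrafilter_le (atTop : Filter ℕ)
    obtain ⟨ν₀, hν₀p, hν₀map, -⟩ :=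
      exists_invariant_limit T hT (fun _ => Classical.arbitrary X) 𝒰 h𝒰
    refine ⟨⟨ν₀, hν₀p⟩, ?_⟩
    have hint_eq : ∀ ν : ProbabilityMeasure X, IsInvariantMeasure T ν → ∀ f : C(X, ℝ),
        ∫ y, f y ∂(ν : Measure X) = Classical.choose (hconv f) := by
      intro ν hν f
      refine integral_eq_const T hT f _ ?_ (ν : Measure X) ((invariant_iff_map T hT ν).1 hν)
      exact Classical.choose_spec (hconv f)
    apply Set.eq_singleton_iff_unique_mem.2
    constructor
    · exact (invariant_iff_map T hT _).2 hν₀map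
    · intro ν hν
      apply ProbabilityMeasure.toMeasure_injective
      show (ν : Measure X) = ν₀
      refine prob_meas_ext _ _ (fun f => ?_)
      exact (hint_eq ν hν f).trans
        (hint_eq ⟨ν₀, hν₀p⟩ ((invariant_iff_map T hT _).2 hν₀map) f).symm
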